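/- If V : ℝ → ℝ is differentiable and (xₙ, pₙ) = Ψⁿ(x₀, p₀) for n ≥ 0, then the positions generated by the mollified impulse integrator satisfy the two-step recurrence x_{n+1} − 2·cos(hω)·xₙ + x_{n−1} = −(h²/m)·φ²·V'(φ·xₙ) for every n ≥ 1, where φ = sin(hω)/(hω). -/

import Mathlib

/-- The one-step mollified impulse integrator with mollifier factor `φ = sin(hω)/(hω)`:
the slow force is evaluated at the averaged position `φ·x` and multiplied by the
Jacobian `φ` of the averaging operator. -/
noncomputable def mollifiedImpulseStep (m ω h : ℝ) (V : ℝ → ℝ) : ℝ × ℝ → ℝ × ℝ :=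
  fun z =>
    let φ := Real.sin (h * ω) / (h * ω)
    let x := z.1
    let p := z.2
    let pbar := p - (h / 2) * (φ * deriv V (φ * x))
    let X := Real.cos (h * ω) * x + (Real.sin (h * ω) / (m * ω)) * pbar
    let pminus := -(m * ω) * Real.sin (h * ω) * x + Real.cos (h * ω) * pbar
    (X, pminus - (h / 2) * (φ * deriv V (φ * X)))

/-- the positions generated by the mollified impulse integrator satisfy the
two-step recurrence `x_{n+1} − 2 cos(hω) xₙ + x_{n−1} = −(h²/m)·φ²·V'(φ·xₙ)` for `n ≥ 1`,
where `φ = sin(hω)/(hω)`. -/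
theorem mollifiedImpulseStep_two_step_recurrence
    (m ω h : ℝ) (hm : 0 < m) (hω : 0 < ω) (hh : 0 < h)
    (V : ℝ → ℝ) (hV : Differentiable ℝ V)
    (x p : ℕ → ℝ)
    (hxp : ∀ n : ℕ, (x n, p n) = (mollifiedImpulseStep m ω h V)^[n] (x 0, p 0)) :
    ∀ n : ℕ, 1 ≤ n →
      x (n + 1) - 2 * Real.cos (h * ω) * x n + x (n - 1) =
        -(h ^ 2 / m) * (Real.sin (h * ω) / (h * ω)) ^ 2 *
          deriv V ((Real.sin (h * ω) / (h * ω)) * x n) := by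
  have hstep : ∀ n : ℕ, (x (n+1), p (n+1)) = mollifiedImpulseStep m ω h V (x n, p n) := by
    intro n
    rw [hxp (n+1), Function.iterate_succ_apply', ← hxp n]
  intro n hn
  obtain ⟨k, rfl⟩ : ∃ k, n = k + 1 := ⟨n-1, (Nat.succ_pred_eq_of_pos hn).symm⟩
  simp only [Nat.add_sub_cancel]
  have h1 := hstep k
  have h2 := hstep (k+1)
  simp only [mollifiedImpulseStep, Prod.mk.injEq] at h1 h2
  obtain ⟨e3, e2⟩ := h1
  obtain ⟨e1, _⟩ := h2
  rw [← e3] at e2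
  set s := Real.sin (h*ω) with hs
  set c := Real.cos (h*ω) with hc
  set φ := s / (h*ω) with hφdef
  set D := s / (m*ω) with hDdef
  have hhω : h*ω ≠ 0 := by positivity
  have hmω : m*ω ≠ 0 := by positivity
  have Hφ : φ * (h*ω) = s := by rw [hφdef]; field_simp
  have HD : D * (m*ω) = s := by rw [hDdef]; field_simp
  have P : s^2 + c^2 = 1 := Real.sin_sq_add_cos_sq _
  set g := deriv V (φ * x (k+1)) with hg
  set g0 := deriv V (φ * x k) with hg0
  have key : (x (k+1+1) - 2*c*x (k+1) + x k) * (m*ω) = -(h^2*ω)*φ^2*g := by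
    linear_combination (m*ω) * e1 + (m*ω*D) * e2 - (m*ω*c) * e3
      - (m*ω*s*(x k) + h*φ*g) * HD - (m*ω*(x k)) * P + (h*φ*g) * Hφ
  have key2 := eq_div_of_mul_eq hmω key
  rw [key2]
  field_simp
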